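/- Let p ∈ (0,1) and let P be the geometric distribution P(k) = p·(1−p)^{k−1} for k ≥ 1. Then g₂(x) = p·(1−p)·e^{−px} for all x ≥ 0; for every integer i ≥ 0 and x ≥ 0, G_i(x) = ((1−p)/p)^i · e^{−i·p·x} / (i!)², so that L(β,x) = ∑_{i=0}^∞ (−(1−p)·e^{−px}/(p·β))^i/(i!)² = J₀(√(4(1−p)e^{−px}/(pβ))); and β₀ = 4(1−p)/(r₀²·p), where r₀ is the smallest positive zero of the Bessel function J₀(x) = ∑_{i=0}^∞ (−1)^i·(x/2)^{2i}/(i!)². -/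

import Mathlib

open MeasureTheory Real Set Filter

/-- `g₂(x) = e^{-x} ∑_{k≥2} P(k) x^{k-2}/(k-2)!`. -/
noncomputable def g2 (P : ℕ → ℝ) (x : ℝ) : ℝ :=
  Real.exp (-x) * ∑' k : ℕ, P (k + 2) * x ^ k / (Nat.factorial k : ℝ)

/-- `G_0(x) = 1`, `G_{i+1}(x) = ∫_x^∞ ∫_y^∞ g₂(z) G_i(z) dz dy`. -/
noncomputable def Gfun (P : ℕ → ℝ) : ℕ → ℝ → ℝ
  | 0 => fun _ => 1
  | (i + 1) => fun x => ∫ y in Ioi x, ∫ z in Ioi y, g2 P z * Gfun P i z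

/-- `L(β,x) = ∑_{i=0}^∞ G_i(x) (-1/β)^i` (real version). -/
noncomputable def Lfun (P : ℕ → ℝ) (β : ℝ) (x : ℝ) : ℝ :=
  ∑' i : ℕ, Gfun P i x * (-1 / β) ^ i

/-- The Bessel function of the first kind of order zero,
`J₀(x) = ∑_{i=0}^∞ (-1)^i (x/2)^{2i} / (i!)²`. -/
noncomputable def J0 (x : ℝ) : ℝ :=
  ∑' i : ℕ, (-1) ^ i * (x / 2) ^ (2 * i) / (Nat.factorial i : ℝ) ^ 2

lemma exp_tsum (t : ℝ) : ∑' n : ℕ, t ^ n / (Nat.factorial n : ℝ) = Real.exp t := by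
  rw [Real.exp_eq_exp_ℝ, NormedSpace.exp_eq_tsum ℝ]
  exact tsum_congr fun n => by rw [smul_eq_mul]; ring

lemma int_exp_Ioi {a : ℝ} (ha : 0 < a) (y : ℝ) :
    ∫ z in Ioi y, Real.exp (-(a * z)) = Real.exp (-(a * y)) / a := by
  have := integral_comp_mul_left_Ioi (fun u => Real.exp (-u)) y ha
  simp only [smul_eq_mul] at this
  rw [this, integral_exp_neg_Ioi, div_eq_inv_mul]

lemma g2_eq (p : ℝ) (hp1 : p < 1)
    (P : ℕ → ℝ) (hP : ∀ k : ℕ, 1 ≤ k → P k = p * (1 - p) ^ (k - 1)) (x : ℝ) :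
    g2 P x = p * (1 - p) * Real.exp (-(p * x)) := by
  unfold g2
  have h1 : ∀ k : ℕ, P (k + 2) * x ^ k / (Nat.factorial k : ℝ)
      = p * (1 - p) * (((1 - p) * x) ^ k / (Nat.factorial k : ℝ)) := by
    intro k
    rw [hP (k + 2) (by omega)]
    rw [show k + 2 - 1 = k + 1 from rfl]
    rw [pow_succ, mul_pow]
    ring
  rw [tsum_congr h1, tsum_mul_left, exp_tsum]
  have he : Real.exp (-x) * Real.exp ((1 - p) * x) = Real.exp (-(p * x)) := by
    rw [← Real.exp_add]; congr 1; ring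
  rw [← he]; ring

lemma Gfun_eq (p : ℝ) (hp : 0 < p) (hp1 : p < 1)
    (P : ℕ → ℝ) (hP : ∀ k : ℕ, 1 ≤ k → P k = p * (1 - p) ^ (k - 1)) :
    ∀ i : ℕ, ∀ x : ℝ, 0 ≤ x →
      Gfun P i x = ((1 - p) / p) ^ i * Real.exp (-((i : ℝ) * p * x)) / (Nat.factorial i : ℝ) ^ 2 := by
  intro i
  induction i with
  | zero => intro x _; simp [Gfun]
  | succ i ih =>
    intro x hx
    have hip : 0 < ((i : ℝ) + 1) * p := by positivity
    set C : ℝ := p * (1 - p) * ((1 - p) / p) ^ i / (Nat.factorial i : ℝ) ^ 2 with hC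
    have hinner : ∀ y ∈ Ioi x, (∫ z in Ioi y, g2 P z * Gfun P i z)
        = C / (((i : ℝ) + 1) * p) * Real.exp (-((((i : ℝ) + 1) * p) * y)) := by
      intro y hy
      have hy0 : 0 ≤ y := le_trans hx (le_of_lt hy)
      have heq : EqOn (fun z => g2 P z * Gfun P i z)
          (fun z => C * Real.exp (-((((i : ℝ) + 1) * p) * z))) (Ioi y) := by
        intro z hz
        have hz0 : 0 ≤ z := le_trans hy0 (le_of_lt hz)
        simp only
        rw [g2_eq p hp1 P hP z, ih z hz0]
        have he : Real.exp (-(p * z)) * Real.exp (-((i : ℝ) * p * z))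
            = Real.exp (-((((i : ℝ) + 1) * p) * z)) := by
          rw [← Real.exp_add]; congr 1; ring
        rw [← he]; ring
      rw [setIntegral_congr_fun measurableSet_Ioi heq, MeasureTheory.integral_const_mul, int_exp_Ioi hip y]
      ring
    show (∫ y in Ioi x, ∫ z in Ioi y, g2 P z * Gfun P i z) = _
    rw [setIntegral_congr_fun measurableSet_Ioi hinner, MeasureTheory.integral_const_mul, int_exp_Ioi hip x]
    have hf : (Nat.factorial i : ℝ) ≠ 0 := Nat.cast_ne_zero.mpr (Nat.factorial_ne_zero i)
    rw [Nat.factorial_succ]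
    push_cast
    rw [hC]
    have hp0 : p ≠ 0 := hp.ne'
    field_simp
    ring_nf
    rw [sq, mul_assoc p p, mul_inv_cancel₀ hp0]
    ring

lemma Lfun_eq (p : ℝ) (hp : 0 < p) (hp1 : p < 1)
    (P : ℕ → ℝ) (hP : ∀ k : ℕ, 1 ≤ k → P k = p * (1 - p) ^ (k - 1))
    (β : ℝ) (hβ : β ≠ 0) (x : ℝ) (hx : 0 ≤ x) :
    Lfun P β x = ∑' i : ℕ, (-((1 - p) * Real.exp (-(p * x)) / (p * β))) ^ i /
      (Nat.factorial i : ℝ) ^ 2 := by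
  unfold Lfun
  refine tsum_congr fun i => ?_
  rw [Gfun_eq p hp hp1 P hP i x hx,
    show -((i : ℝ) * p * x) = (i : ℝ) * (-(p * x)) by ring, Real.exp_nat_mul,
    div_mul_eq_mul_div, ← mul_pow, ← mul_pow]
  congr 2
  field_simp

lemma J0_sqrt (t : ℝ) (ht : 0 ≤ t) :
    J0 (Real.sqrt t) = ∑' i : ℕ, (-(t / 4)) ^ i / (Nat.factorial i : ℝ) ^ 2 := by
  unfold J0
  refine tsum_congr fun i => ?_
  rw [pow_mul, div_pow, Real.sq_sqrt ht, ← mul_pow]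
  norm_num

theorem stmt_19 (p : ℝ) (hp : 0 < p) (hp1 : p < 1)
    (P : ℕ → ℝ) (hP : ∀ k : ℕ, 1 ≤ k → P k = p * (1 - p) ^ (k - 1)) (hP0 : P 0 = 0)
    (r₀ : ℝ) (hr₀pos : 0 < r₀) (hr₀zero : J0 r₀ = 0)
    (hr₀min : ∀ r : ℝ, 0 < r → r < r₀ → J0 r ≠ 0)
    (β₀ : ℝ) (hβ₀pos : 0 < β₀) (hL0 : Lfun P β₀ 0 = 0)
    (hLnn : ∀ x : ℝ, 0 ≤ x → 0 ≤ Lfun P β₀ x)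
    (hLpos : ∀ β : ℝ, β₀ < β → ∀ x : ℝ, 0 ≤ x → 0 < Lfun P β x) :
    (∀ x : ℝ, 0 ≤ x → g2 P x = p * (1 - p) * Real.exp (-(p * x))) ∧
    (∀ i : ℕ, ∀ x : ℝ, 0 ≤ x →
      Gfun P i x =
        ((1 - p) / p) ^ i * Real.exp (-((i : ℝ) * p * x)) / (Nat.factorial i : ℝ) ^ 2) ∧
    (∀ β : ℝ, β ≠ 0 → ∀ x : ℝ, 0 ≤ x →
      Lfun P β x =
        ∑' i : ℕ, (-((1 - p) * Real.exp (-(p * x)) / (p * β))) ^ i /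
          (Nat.factorial i : ℝ) ^ 2) ∧
    (∀ β : ℝ, 0 < β → ∀ x : ℝ, 0 ≤ x →
      Lfun P β x = J0 (Real.sqrt (4 * (1 - p) * Real.exp (-(p * x)) / (p * β)))) ∧
    β₀ = 4 * (1 - p) / (r₀ ^ 2 * p) := by
  have hp' : (0:ℝ) < 1 - p := by linarith
  have L_J0 : ∀ β : ℝ, 0 < β → ∀ x : ℝ, 0 ≤ x →
      Lfun P β x = J0 (Real.sqrt (4 * (1 - p) * Real.exp (-(p * x)) / (p * β))) := by
    intro β hβ x hx
    rw [Lfun_eq p hp hp1 P hP β hβ.ne' x hx, J0_sqrt _ (by positivity),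
      show 4 * (1 - p) * Real.exp (-(p * x)) / (p * β) / 4
        = (1 - p) * Real.exp (-(p * x)) / (p * β) by ring]
  refine ⟨fun x _ => g2_eq p hp1 P hP x, Gfun_eq p hp hp1 P hP,
    Lfun_eq p hp hp1 P hP, L_J0, ?_⟩
  set s := Real.sqrt (4 * (1 - p) / (p * β₀)) with hs_def
  have ht0 : (0:ℝ) < 4 * (1 - p) / (p * β₀) := by positivity
  have hs2 : s ^ 2 = 4 * (1 - p) / (p * β₀) := Real.sq_sqrt ht0.le
  have hs_pos : 0 < s := Real.sqrt_pos.mpr ht0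
  have hJs : J0 s = 0 := by
    have h := hL0
    rw [L_J0 β₀ hβ₀pos 0 le_rfl] at h
    simpa using h
  have hβ₀eq : β₀ = 4 * (1 - p) / (s ^ 2 * p) := by
    rw [hs2]; field_simp
  have hsr : r₀ ≤ s := not_lt.mp fun h => hr₀min s hs_pos h hJs
  have hsr2 : s ≤ r₀ := by
    by_contra h
    push_neg at h
    set β : ℝ := 4 * (1 - p) / (r₀ ^ 2 * p) with hβ_def
    have hββ : β₀ < β := by
      rw [hβ₀eq, hβ_def]
      apply div_lt_div_of_pos_left (by linarith) (by positivity)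
      have : r₀ ^ 2 < s ^ 2 := by nlinarith
      nlinarith
    have hLβ := hLpos β hββ 0 le_rfl
    have hβpos : 0 < β := lt_trans hβ₀pos hββ
    have heq : Lfun P β 0 = J0 r₀ := by
      rw [L_J0 β hβpos 0 le_rfl]
      congr 1
      rw [show 4 * (1 - p) * Real.exp (-(p * 0)) / (p * β) = r₀ ^ 2 by
        rw [hβ_def]; simp; field_simp]
      exact Real.sqrt_sq hr₀pos.le
    rw [heq, hr₀zero] at hLβ
    exact lt_irrefl 0 hLβ
  have hs : s = r₀ := le_antisymm hsr2 hsr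
  rw [hβ₀eq, hs]
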